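/- Let J be a nonempty index set, and for each j ∈ J let (X_j, d_j) be a metric space and A_j, B_j nonempty closed subsets of X_j. Then in the product space with sup extended metric d_J, (i) ∏_j A_j and ∏_j B_j are nonempty closed; (ii) for each x ∈ ∏_j X_j, d_J(x, ∏_j B_j) = sup_j d_j(x_j, B_j); (iii) H*(∏_j A_j, ∏_j B_j) = sup_j H*(A_j, B_j); (iv) H(∏_j A_j, ∏_j B_j) = sup_j H(A_j, B_j). -/

import Mathlib

open Set ENNReal

variable {J : Type*} {X : J → Type*} [∀ j, MetricSpace (X j)]

/-- The sup extended metric on the product `∀ j, X j`. -/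
noncomputable def piEdist (x y : ∀ j, X j) : ℝ≥0∞ := ⨆ j, edist (x j) (y j)

/-- Distance from a point to a set with respect to `piEdist`. -/
noncomputable def piInfEdist (x : ∀ j, X j) (S : Set (∀ j, X j)) : ℝ≥0∞ :=
  ⨅ s ∈ S, piEdist x s

/-- The Hausdorff pre-distance `H*` with respect to `piEdist`. -/
noncomputable def piHstar (S T : Set (∀ j, X j)) : ℝ≥0∞ := ⨆ x ∈ S, piInfEdist x T

/-- For nonempty closed sets `A j, B j`: products are nonempty closed, and the point-set
distance, Hausdorff pre-distance and Hausdorff distance of the products (for the sup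
extended metric) are the suprema of the factorwise ones. -/
lemma piInfEdist_pi (x : ∀ j, X j) (B : ∀ j, Set (X j)) (hB : ∀ j, (B j).Nonempty) :
    piInfEdist x (Set.univ.pi B) = ⨆ j, EMetric.infEdist (x j) (B j) := by
  apply le_antisymm
  · apply ENNReal.le_of_forall_pos_le_add
    intro ε hε hfin
    have key : ∀ j, ∃ b ∈ B j, edist (x j) b < (⨆ j, EMetric.infEdist (x j) (B j)) + ε := by
      intro j
      rw [← EMetric.infEdist_lt_iff]
      calc EMetric.infEdist (x j) (B j) ≤ ⨆ j, EMetric.infEdist (x j) (B j) := le_iSup (fun j => EMetric.infEdist (x j) (B j)) j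
        _ < _ + ε := ENNReal.lt_add_right hfin.ne (by exact_mod_cast hε.ne')
    choose b hb hblt using key
    have hbmem : b ∈ Set.univ.pi B := fun j _ => hb j
    calc piInfEdist x (Set.univ.pi B) ≤ piEdist x b := iInf₂_le b hbmem
      _ ≤ _ := iSup_le fun j => (hblt j).le
  · refine le_iInf₂ fun b hb => iSup_le fun j => ?_
    exact le_trans (EMetric.infEdist_le_edist_of_mem (hb j (mem_univ j)))
      (le_iSup (fun j => edist (x j) (b j)) j)

lemma piHstar_pi (A B : ∀ j, Set (X j)) (hA : ∀ j, (A j).Nonempty)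
    (hB : ∀ j, (B j).Nonempty) :
    piHstar (Set.univ.pi A) (Set.univ.pi B) = ⨆ j, ⨆ a ∈ A j, EMetric.infEdist a (B j) := by
  classical
  apply le_antisymm
  · refine iSup₂_le fun x hx => ?_
    rw [piInfEdist_pi x B hB]
    exact iSup_mono fun j =>
      le_iSup₂ (f := fun a (_ : a ∈ A j) => EMetric.infEdist a (B j)) (x j) (hx j (mem_univ j))
  · refine iSup_le fun j => iSup₂_le fun a ha => ?_
    choose c hc using hA
    set x := Function.update c j a with hxdef
    have hx : x ∈ Set.univ.pi A := by
      intro i _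
      rcases eq_or_ne i j with rfl | h
      · simpa [x] using ha
      · simpa [x, Function.update_of_ne h] using hc i
    calc EMetric.infEdist a (B j) = EMetric.infEdist (x j) (B j) := by simp [x]
      _ ≤ ⨆ i, EMetric.infEdist (x i) (B i) := le_iSup (fun j => EMetric.infEdist (x j) (B j)) j
      _ = piInfEdist x (Set.univ.pi B) := (piInfEdist_pi x B hB).symm
      _ ≤ _ := le_iSup₂ (f := fun y (_ : y ∈ Set.univ.pi A) => piInfEdist y (Set.univ.pi B)) x hx

lemma pi_closed_char (A : ∀ j, Set (X j)) (hA : ∀ j, (A j).Nonempty ∧ IsClosed (A j)) :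
    {x : ∀ j, X j | ∀ ε : ℝ≥0∞, 0 < ε → ∃ a ∈ Set.univ.pi A, piEdist x a < ε} =
      Set.univ.pi A := by
  ext x
  constructor
  · intro hx j _
    have : x j ∈ closure (A j) := by
      rw [EMetric.mem_closure_iff]
      intro ε hε
      obtain ⟨a, ha, hlt⟩ := hx ε hε
      exact ⟨a j, ha j (mem_univ j), lt_of_le_of_lt (le_iSup (fun i => edist (x i) (a i)) j) hlt⟩
    rwa [(hA j).2.closure_eq] at this
  · intro hx ε hε
    refine ⟨x, hx, ?_⟩
    have : piEdist x x = 0 := by simp [piEdist]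
    simpa [this] using hε

theorem stmt_13 [Nonempty J] (A B : ∀ j, Set (X j))
    (hA : ∀ j, (A j).Nonempty ∧ IsClosed (A j))
    (hB : ∀ j, (B j).Nonempty ∧ IsClosed (B j)) :
    ((Set.univ.pi A).Nonempty ∧ (Set.univ.pi B).Nonempty ∧
      {x : ∀ j, X j | ∀ ε : ℝ≥0∞, 0 < ε → ∃ a ∈ Set.univ.pi A, piEdist x a < ε} =
        Set.univ.pi A ∧
      {x : ∀ j, X j | ∀ ε : ℝ≥0∞, 0 < ε → ∃ b ∈ Set.univ.pi B, piEdist x b < ε} =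
        Set.univ.pi B) ∧
    (∀ x : ∀ j, X j,
      piInfEdist x (Set.univ.pi B) = ⨆ j, EMetric.infEdist (x j) (B j)) ∧
    (piHstar (Set.univ.pi A) (Set.univ.pi B) = ⨆ j, ⨆ a ∈ A j, EMetric.infEdist a (B j)) ∧
    (max (piHstar (Set.univ.pi A) (Set.univ.pi B)) (piHstar (Set.univ.pi B) (Set.univ.pi A)) =
      ⨆ j, EMetric.hausdorffEdist (A j) (B j)) := by
  have hAne : ∀ j, (A j).Nonempty := fun j => (hA j).1
  have hBne : ∀ j, (B j).Nonempty := fun j => (hB j).1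
  refine ⟨⟨?_, ?_, pi_closed_char A hA, pi_closed_char B hB⟩,
    fun x => piInfEdist_pi x B hBne, piHstar_pi A B hAne hBne, ?_⟩
  · choose a ha using hAne
    exact ⟨a, fun j _ => ha j⟩
  · choose b hb using hBne
    exact ⟨b, fun j _ => hb j⟩
  · rw [piHstar_pi A B hAne hBne, piHstar_pi B A hBne hAne]
    simp only [EMetric.hausdorffEdist, EMetric.infEdist, Metric.hausdorffEDist_def]
    rw [iSup_sup_eq]
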